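/- Let q ≥ 2, h ≥ 1 and u ≥ 1 be integers, and let m₀, m₁, m₂, m₃ be integers satisfying q^(u-1) ≤ m₀, m₂, m₃ < q^u and 1 ≤ m₁ < q^u/(hq(6q)^h). Write t(x) = m₃x³ + m₂x² − m₁x + m₀ and let c₀, c₁, …, c_{3h} be the (integer) coefficients of t(x)^h. Then c_i > 0 for every i ∈ {0, 2, 3, …, 3h} and c₁ < 0. -/

import Mathlib

open Polynomial Finset

private lemma pow_coeff_nonneg' {s : Polynomial ℤ} (hs : ∀ i, 0 ≤ s.coeff i) :
    ∀ m i, 0 ≤ (s ^ m).coeff i := by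
  intro m
  induction m with
  | zero => intro i; simp [coeff_one]; split <;> norm_num
  | succ n ih =>
    intro i
    rw [pow_succ, coeff_mul]
    exact Finset.sum_nonneg fun x _ => mul_nonneg (ih x.1) (hs x.2)

private lemma coeff_le_eval_one' {p : Polynomial ℤ} (hp : ∀ i, 0 ≤ p.coeff i) (i : ℕ) :
    p.coeff i ≤ p.eval 1 := by
  rw [eval_eq_sum_range]
  simp only [one_pow, mul_one]
  by_cases hi : i < p.natDegree + 1
  · exact Finset.single_le_sum (fun j _ => hp j) (Finset.mem_range.2 hi)
  · rw [coeff_eq_zero_of_natDegree_lt (by omega)]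
    exact Finset.sum_nonneg fun j _ => hp j

set_option maxHeartbeats 1600000 in
theorem coefficients_of_t_pow_h_integer
    (q h u : ℕ) (hq : 2 ≤ q) (hh : 1 ≤ h) (hu : 1 ≤ u)
    (m₀ m₁ m₂ m₃ : ℤ)
    (hm₀ : (q : ℤ) ^ (u - 1) ≤ m₀) (hm₀' : m₀ < (q : ℤ) ^ u)
    (hm₂ : (q : ℤ) ^ (u - 1) ≤ m₂) (hm₂' : m₂ < (q : ℤ) ^ u)
    (hm₃ : (q : ℤ) ^ (u - 1) ≤ m₃) (hm₃' : m₃ < (q : ℤ) ^ u)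
    (hm₁ : 1 ≤ m₁)
    (hm₁' : (m₁ : ℝ) < (q : ℝ) ^ u / ((h : ℝ) * q * (6 * q : ℝ) ^ h))
    (t : Polynomial ℤ)
    (ht : t = C m₃ * X ^ 3 + C m₂ * X ^ 2 - C m₁ * X + C m₀) :
    (∀ i : ℕ, i = 0 ∨ (2 ≤ i ∧ i ≤ 3 * h) → 0 < (t ^ h).coeff i) ∧
    (t ^ h).coeff 1 < 0 := by
  set L : ℤ := (q : ℤ) ^ (u - 1) with hLdef
  set Q : ℤ := (q : ℤ) ^ u with hQdef
  have hq0 : (0:ℤ) < q := by exact_mod_cast (by omega : 0 < q)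
  have hL : 0 < L := pow_pos hq0 _
  have hQ : 0 < Q := pow_pos hq0 _
  have hLQ : L * q = Q := by
    rw [hLdef, hQdef, ← pow_succ]
    congr 1
    omega
  set s : Polynomial ℤ := C m₃ * X ^ 3 + C m₂ * X ^ 2 + C m₀ with hsdef
  have hscoeff : ∀ i, s.coeff i =
      if i = 0 then m₀ else if i = 2 then m₂ else if i = 3 then m₃ else 0 := by
    intro i
    simp only [hsdef, coeff_add, coeff_C_mul, coeff_X_pow, coeff_C]
    split_ifs <;> omega
  have hsnn : ∀ i, 0 ≤ s.coeff i := by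
    intro i
    rw [hscoeff]
    split_ifs <;> first | positivity | linarith
  have hsnnpow := pow_coeff_nonneg' hsnn
  -- lower bound on good coefficients of s^m
  have hlow : ∀ m, 1 ≤ m → ∀ i, (i = 0 ∨ (2 ≤ i ∧ i ≤ 3 * m)) → L ^ m ≤ (s ^ m).coeff i := by
    intro m hm
    induction m, hm using Nat.le_induction with
    | base =>
      intro i hi
      rw [pow_one, pow_one, hscoeff]
      rcases hi with rfl | ⟨h2, h3⟩
      · simpa using hm₀
      · interval_cases i <;> simp [hm₂, hm₃]
    | succ m hm ih =>
      intro i hi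
      have key : ∀ a b : ℕ, a + b = i → L ^ m ≤ (s ^ m).coeff a → L ≤ s.coeff b →
          L ^ (m+1) ≤ (s ^ (m+1)).coeff i := by
        intro a b hab ha hb
        calc L ^ (m+1) = L ^ m * L := pow_succ L m
          _ ≤ (s ^ m).coeff a * s.coeff b :=
            mul_le_mul ha hb hL.le (hsnnpow m a)
          _ ≤ (s ^ m * s).coeff i := by
              rw [coeff_mul]
              have hmem : (a, b) ∈ Finset.HasAntidiagonal.antidiagonal i := Finset.HasAntidiagonal.mem_antidiagonal.2 hab
              exact Finset.single_le_sum
                (f := fun x : ℕ × ℕ => (s ^ m).coeff x.1 * s.coeff x.2)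
                (fun x _ => mul_nonneg (hsnnpow m x.1) (hsnn x.2)) hmem
          _ = (s ^ (m+1)).coeff i := by rw [← pow_succ]
      have hb0 : L ≤ s.coeff 0 := by rw [hscoeff]; simpa using hm₀
      have hb2 : L ≤ s.coeff 2 := by rw [hscoeff]; simpa using hm₂
      have hb3 : L ≤ s.coeff 3 := by rw [hscoeff]; simpa using hm₃
      rcases hi with rfl | ⟨h2, h3⟩
      · exact key 0 0 rfl (ih 0 (Or.inl rfl)) hb0
      · rcases Nat.lt_or_ge i 5 with h5 | h5
        · interval_cases i
          · exact key 0 2 rfl (ih 0 (Or.inl rfl)) hb2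
          · exact key 0 3 rfl (ih 0 (Or.inl rfl)) hb3
          · exact key 2 2 rfl (ih 2 (Or.inr ⟨le_refl 2, by omega⟩)) hb2
        · exact key (i - 3) 3 (by omega)
            (ih (i - 3) (Or.inr ⟨by omega, by omega⟩)) hb3
  -- coeff 1 of s^m is 0
  have hc1 : ∀ m, (s ^ m).coeff 1 = 0 := by
    intro m
    induction m with
    | zero => simp [coeff_one]
    | succ n ih =>
      rw [pow_succ, coeff_mul, Finset.Nat.sum_antidiagonal_eq_sum_range_succ_mk]
      rw [Finset.sum_range_succ, Finset.sum_range_succ]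
      simp only [Finset.sum_range_zero]
      have h1 : s.coeff 1 = 0 := by rw [hscoeff]; norm_num
      simp [ih, h1]
  -- upper bound
  have hsum : m₃ + m₂ + m₀ ≤ 3 * Q := by linarith
  have hup : ∀ m i, (s ^ m).coeff i ≤ (3 * Q) ^ m := by
    intro m i
    calc (s ^ m).coeff i ≤ (s ^ m).eval 1 := coeff_le_eval_one' (hsnnpow m) i
      _ = (s.eval 1) ^ m := by rw [eval_pow]
      _ ≤ (3 * Q) ^ m := by
        apply pow_le_pow_left₀ _ _ m
        · simp [hsdef]; linarith
        · simp [hsdef]; linarith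
  -- expansion
  have ht' : t = C (-m₁) * X + s := by
    rw [ht, hsdef, map_neg]
    ring
  have hexp : ∀ i, (t ^ h).coeff i = ∑ k ∈ range (h+1),
      (-m₁) ^ k * (h.choose k : ℤ) * (if k ≤ i then (s ^ (h - k)).coeff (i - k) else 0) := by
    intro i
    rw [ht', add_pow, finset_sum_coeff]
    refine Finset.sum_congr rfl fun k hk => ?_
    have h1 : (C (-m₁) * X) ^ k * s ^ (h - k) * ((h.choose k : ℕ) : Polynomial ℤ) =
        C ((-m₁) ^ k * (h.choose k : ℤ)) * (s ^ (h - k) * X ^ k) := by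
      rw [mul_pow, ← C_pow, ← C_eq_natCast, C_mul]
      ring
    rw [h1, coeff_C_mul, coeff_mul_X_pow']
  -- key integer inequality
  have hh1 : (1:ℤ) ≤ (h:ℤ) := by exact_mod_cast hh
  have hq2 : (2:ℤ) ≤ (q:ℤ) := by exact_mod_cast hq
  have hkey1 : m₁ * ((h : ℤ) * q * (6 * q) ^ h) < Q := by
    have hhR : (0:ℝ) < (h : ℝ) := by exact_mod_cast (by omega : 0 < h)
    have hqR : (0:ℝ) < (q : ℝ) := by exact_mod_cast (by omega : 0 < q)
    have hd : (0:ℝ) < (h : ℝ) * q * (6 * q : ℝ) ^ h := by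
      apply mul_pos (mul_pos hhR hqR)
      apply pow_pos
      linarith
    have h2 := (lt_div_iff₀ hd).1 hm₁'
    rw [hQdef]
    exact_mod_cast h2
  have hp6 : (1:ℤ) ≤ (6 * q) ^ h := by
    calc (1:ℤ) = 1^h := (one_pow h).symm
      _ ≤ (6 * q) ^ h := pow_le_pow_left₀ (by norm_num) (by linarith) h
  have hhq : (1:ℤ) ≤ (h:ℤ) * q := by nlinarith
  have hdge1 : (1:ℤ) ≤ (h : ℤ) * q * (6 * q) ^ h := by nlinarith
  have hm₁Q : m₁ ≤ Q := by nlinarith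
  have h4le6 : (4:ℤ)^h ≤ 6^h := pow_le_pow_left₀ (by norm_num) (by norm_num) h
  have hkey2 : m₁ * ((q:ℤ)^h * 4^h) < Q := by
    have hqpow : (0:ℤ) ≤ (q:ℤ)^h := by positivity
    have s1 : (q:ℤ)^h * 4^h ≤ (h:ℤ) * q * (6 * q) ^ h := by
      rw [mul_pow]
      calc (q:ℤ)^h * 4^h ≤ q^h * 6^h := mul_le_mul_of_nonneg_left h4le6 hqpow
        _ = 1 * (6^h * q^h) := by ring
        _ ≤ ((h:ℤ) * q) * (6^h * q^h) := by
            apply mul_le_mul_of_nonneg_right _ (by positivity)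
            nlinarith
    calc m₁ * ((q:ℤ)^h * 4^h) ≤ m₁ * ((h:ℤ) * q * (6 * q) ^ h) :=
          mul_le_mul_of_nonneg_left s1 (by linarith)
      _ < Q := hkey1
  have hkey : m₁ * 4^h * Q^(h-1) < L^h := by
    have hq_pow : (0:ℤ) < (q:ℤ)^h := pow_pos hq0 h
    have hQp : (0:ℤ) < Q^(h-1) := pow_pos hQ _
    have e2 : Q ^ (h-1) * Q = Q ^ h := by rw [← pow_succ]; congr 1; omega
    have e3 : L ^ h * (q:ℤ)^h = Q ^ h := by rw [← mul_pow, hLQ]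
    have hmul : m₁ * 4^h * Q^(h-1) * (q:ℤ)^h < L^h * (q:ℤ)^h := by
      rw [e3, ← e2]
      calc m₁ * 4^h * Q^(h-1) * (q:ℤ)^h = (m₁ * ((q:ℤ)^h * 4^h)) * Q^(h-1) := by ring
        _ < Q * Q^(h-1) := mul_lt_mul_of_pos_right hkey2 hQp
        _ = Q^(h-1) * Q := by ring
    exact lt_of_mul_lt_mul_right hmul hq_pow.le
  constructor
  · -- positive coefficients
    intro i hi
    rw [hexp i, Finset.sum_range_succ']
    have hmain : L ^ h ≤ (s ^ h).coeff i := hlow h hh i hi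
    have hf0 : (-m₁) ^ 0 * ((h.choose 0 : ℕ) : ℤ) *
        (if 0 ≤ i then (s ^ (h - 0)).coeff (i - 0) else 0) = (s ^ h).coeff i := by
      simp
    rw [hf0]
    -- bound the error terms
    set B : ℕ → ℤ := fun k => ((h.choose (k+1) : ℕ) : ℤ) * 3^(h-(k+1)) with hBdef
    have hterm : ∀ k ∈ range h,
        -(m₁ * Q^(h-1) * B k) ≤ (-m₁) ^ (k+1) * ((h.choose (k+1) : ℕ) : ℤ) *
          (if k+1 ≤ i then (s ^ (h - (k+1))).coeff (i - (k+1)) else 0) := by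
      intro k hk
      have hkh : k < h := Finset.mem_range.1 hk
      have hBnn : 0 ≤ B k := by rw [hBdef]; positivity
      have hQb : (0:ℤ) ≤ m₁ * Q^(h-1) := by positivity
      by_cases hif : k+1 ≤ i
      · rw [if_pos hif]
        set c : ℤ := ((h.choose (k+1) : ℕ) : ℤ) with hcdef
        set w : ℤ := (s ^ (h - (k+1))).coeff (i - (k+1)) with hwdef
        have hcnn : 0 ≤ c := by positivity
        have hwnn : 0 ≤ w := hsnnpow _ _
        have hwle : w ≤ (3*Q)^(h-(k+1)) := hup _ _
        have habs : |(-m₁) ^ (k+1) * c * w| = m₁^(k+1) * c * w := by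
          rw [abs_mul, abs_mul, abs_pow, abs_neg, abs_of_nonneg (by linarith : (0:ℤ) ≤ m₁),
            abs_of_nonneg hcnn, abs_of_nonneg hwnn]
        have hm₁pow : m₁^(k+1) ≤ m₁ * Q^k := by
          rw [pow_succ']
          exact mul_le_mul_of_nonneg_left (pow_le_pow_left₀ (by linarith) hm₁Q k) (by linarith)
        have eQ : Q^k * Q^(h-(k+1)) = Q^(h-1) := by rw [← pow_add]; congr 1; omega
        have hchain : m₁^(k+1) * c * w ≤ m₁ * Q^(h-1) * B k := by
          calc m₁^(k+1) * c * w ≤ m₁^(k+1) * c * (3*Q)^(h-(k+1)) :=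
                mul_le_mul_of_nonneg_left hwle (by positivity)
            _ ≤ (m₁ * Q^k) * c * (3*Q)^(h-(k+1)) := by
                apply mul_le_mul_of_nonneg_right _ (by positivity)
                exact mul_le_mul_of_nonneg_right hm₁pow hcnn
            _ = m₁ * (Q^k * Q^(h-(k+1))) * (c * 3^(h-(k+1))) := by rw [mul_pow]; ring
            _ = m₁ * Q^(h-1) * B k := by rw [eQ, hBdef]
        calc -(m₁ * Q^(h-1) * B k) ≤ -(m₁^(k+1) * c * w) := by linarith
          _ ≤ -|(-m₁) ^ (k+1) * c * w| := by rw [habs]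
          _ ≤ (-m₁) ^ (k+1) * c * w := neg_abs_le _
      · rw [if_neg hif, mul_zero]
        have : 0 ≤ m₁ * Q^(h-1) * B k := by positivity
        linarith
    have hsumge : -(m₁ * Q^(h-1) * ∑ k ∈ range h, B k) ≤
        ∑ k ∈ range h, (-m₁) ^ (k+1) * ((h.choose (k+1) : ℕ) : ℤ) *
          (if k+1 ≤ i then (s ^ (h - (k+1))).coeff (i - (k+1)) else 0) := by
      rw [Finset.mul_sum, ← Finset.sum_neg_distrib]
      exact Finset.sum_le_sum hterm
    have hBsum : ∑ k ∈ range h, B k ≤ 4^h := by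
      have h1 : ((1:ℤ) + 3)^h = ∑ k ∈ range (h+1), 1^k * 3^(h-k) * ((h.choose k : ℕ) : ℤ) :=
        add_pow 1 3 h
      rw [Finset.sum_range_succ'] at h1
      simp only [one_pow, one_mul, Nat.choose_zero_right, Nat.cast_one, mul_one,
        Nat.sub_zero] at h1
      have h2 : ∑ k ∈ range h, B k = ∑ k ∈ range h, 3^(h-(k+1)) * ((h.choose (k+1) : ℕ) : ℤ) := by
        refine Finset.sum_congr rfl fun k _ => ?_
        rw [hBdef]; ring
      have h3 : (0:ℤ) ≤ 3^h := by positivity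
      have h14 : ((1:ℤ) + 3)^h = 4^h := by norm_num
      rw [h2]
      linarith
    have hQp : (0:ℤ) ≤ m₁ * Q^(h-1) := by positivity
    nlinarith [mul_le_mul_of_nonneg_left hBsum hQp]
  · -- coeff 1 is negative
    rw [hexp 1]
    have hval : (∑ k ∈ range (h+1), (-m₁) ^ k * ((h.choose k : ℕ) : ℤ) *
        (if k ≤ 1 then (s ^ (h - k)).coeff (1 - k) else 0)) =
        (-m₁) * h * (s ^ (h-1)).coeff 0 := by
      rw [Finset.sum_eq_single 1]
      · simp
      · intro b hb hb1
        rcases Nat.eq_zero_or_pos b with rfl | hbpos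
        · simp [hc1]
        · rw [if_neg (by omega), mul_zero]
      · intro hmem
        exact absurd (Finset.mem_range.2 (by omega)) hmem
    rw [hval]
    have hev : (s ^ (h-1)).coeff 0 = m₀ ^ (h-1) := by
      rw [coeff_zero_eq_eval_zero, eval_pow]
      simp [hsdef]
    rw [hev]
    have hm0pos : 0 < m₀ := lt_of_lt_of_le hL hm₀
    have : 0 < m₁ * (h:ℤ) * m₀ ^ (h-1) := by positivity
    nlinarith
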